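/- arXiv:2105.11338 — 3 statements merged into one kernel-verified Lean document; each statement's English description precedes it below -/
import Mathlib

section
/- Let P and Q be probability measures on a countable measurable space (with all subsets measurable) and let α ∈ [0,1]. Then there exist finite measures μ, μ₀, μ₁ on this space such that μ₀ and μ₁ are mutually singular, P = (1−α)·μ + μ₀, and Q = μ + μ₁. (Equivalently, writing μ = (1−δ)𝒟, μ₀ = (1−(1−α)(1−δ))𝒟₀′ and μ₁ = δ𝒟₁′ for probability measures 𝒟, 𝒟₀′, 𝒟₁′ and some δ ∈ [0,1], one has P = (1−α)(1−δ)𝒟 + (1−(1−α)(1−δ))𝒟₀′ and Q = (1−δ)𝒟 + δ𝒟₁′ with 𝒟₀′ and 𝒟₁′ supported on disjoint sets.) -/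
open MeasureTheory
open scoped NNReal ENNReal

/-- On a countable space where all sets are measurable, a measure of a set is the
sum of the measures of its points. -/
lemma meas_eq_tsum_aux {Ω : Type*} [Countable Ω] [MeasurableSpace Ω]
    (hmeas : ∀ s : Set Ω, MeasurableSet s) (μ : Measure Ω) (s : Set Ω) :
    μ s = ∑' ω : s, μ {(ω : Ω)} := by
  have hs : s.Countable := s.to_countable
  have := tsum_measure_preimage_singleton (μ := μ) hs (f := id)
    (fun y _ => hmeas _)
  simpa using this.symm

/-- Pointwise domination implies domination of measures of sets. -/
lemma meas_le_of_pointwise {Ω : Type*} [Countable Ω] [MeasurableSpace Ω]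
    (hmeas : ∀ s : Set Ω, MeasurableSet s) (μ ν : Measure Ω) (s : Set Ω)
    (h : ∀ ω ∈ s, μ {ω} ≤ ν {ω}) : μ s ≤ ν s := by
  rw [meas_eq_tsum_aux hmeas μ s, meas_eq_tsum_aux hmeas ν s]
  exact ENNReal.tsum_le_tsum fun ω => h ω ω.2

/-- Decomposition of two probability measures `P, Q` on a countable
measurable space (all subsets measurable): for any `α ∈ [0,1]` there are finite
measures `μ, μ₀, μ₁` with `μ₀` and `μ₁` mutually singular, `P = (1-α)•μ + μ₀`
and `Q = μ + μ₁`. -/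
theorem mostly_disj_measure_decomposition
    {Ω : Type*} [Countable Ω] [MeasurableSpace Ω]
    (hmeas : ∀ s : Set Ω, MeasurableSet s)
    (P Q : Measure Ω) [IsProbabilityMeasure P] [IsProbabilityMeasure Q]
    (α : ℝ≥0) (hα : α ≤ 1) :
    ∃ (μ μ₀ μ₁ : Measure Ω), IsFiniteMeasure μ ∧ IsFiniteMeasure μ₀ ∧
      IsFiniteMeasure μ₁ ∧ Measure.MutuallySingular μ₀ μ₁ ∧
      P = (1 - α) • μ + μ₀ ∧ Q = μ + μ₁ := by
  rcases eq_or_lt_of_le hα with h1 | h1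
  · -- α = 1
    refine ⟨Q, P, 0, inferInstance, inferInstance, inferInstance,
      Measure.MutuallySingular.zero_right, ?_, by simp⟩
    rw [← h1]
    simp
  · -- α < 1
    set c : ℝ≥0∞ := ((1 - α : ℝ≥0) : ℝ≥0∞) with hc
    have hc0 : c ≠ 0 := by
      simp only [hc, Ne, ENNReal.coe_eq_zero]
      exact (tsub_pos_of_lt h1).ne'
    have hctop : c ≠ ∞ := ENNReal.coe_ne_top
    set A : Set Ω := {ω | P {ω} ≤ c * Q {ω}} with hA
    -- key inequalities
    have hle₁ : c⁻¹ • P.restrict A ≤ Q.restrict A := by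
      refine Measure.le_iff.2 fun s _ => ?_
      rw [Measure.smul_apply, Measure.restrict_apply (hmeas s),
        Measure.restrict_apply (hmeas s), smul_eq_mul,
        meas_eq_tsum_aux hmeas P (s ∩ A), meas_eq_tsum_aux hmeas Q (s ∩ A),
        ← ENNReal.tsum_mul_left]
      refine ENNReal.tsum_le_tsum fun ω => ?_
      have hω : P {(ω : Ω)} ≤ c * Q {(ω : Ω)} := ω.2.2
      calc c⁻¹ * P {(ω : Ω)} ≤ c⁻¹ * (c * Q {(ω : Ω)}) := mul_le_mul_right hω _
        _ = Q {(ω : Ω)} := by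
            rw [← mul_assoc, ENNReal.inv_mul_cancel hc0 hctop, one_mul]
    have hle₀ : c • Q.restrict Aᶜ ≤ P.restrict Aᶜ := by
      refine Measure.le_iff.2 fun s _ => ?_
      rw [Measure.smul_apply, Measure.restrict_apply (hmeas s),
        Measure.restrict_apply (hmeas s), smul_eq_mul,
        meas_eq_tsum_aux hmeas Q (s ∩ Aᶜ), meas_eq_tsum_aux hmeas P (s ∩ Aᶜ),
        ← ENNReal.tsum_mul_left]
      refine ENNReal.tsum_le_tsum fun ω => ?_
      have hω : ¬ (P {(ω : Ω)} ≤ c * Q {(ω : Ω)}) := ω.2.2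
      exact (not_le.1 hω).le
    set μ : Measure Ω := c⁻¹ • P.restrict A + Q.restrict Aᶜ with hμ
    set μ₀ : Measure Ω := P.restrict Aᶜ - c • Q.restrict Aᶜ with hμ₀
    set μ₁ : Measure Ω := Q.restrict A - c⁻¹ • P.restrict A with hμ₁
    have hμ₀le : μ₀ ≤ P := le_trans (Measure.sub_le) (Measure.restrict_le_self)
    have hμ₁le : μ₁ ≤ Q := le_trans (Measure.sub_le) (Measure.restrict_le_self)
    have hμle : μ ≤ Q.restrict A + Q.restrict Aᶜ :=
      add_le_add hle₁ le_rfl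
    have hμle' : μ ≤ Q := by
      rwa [Measure.restrict_add_restrict_compl (hmeas A)] at hμle
    have instμ : IsFiniteMeasure μ := isFiniteMeasure_of_le Q hμle'
    have instμ₀ : IsFiniteMeasure μ₀ := isFiniteMeasure_of_le P hμ₀le
    have instμ₁ : IsFiniteMeasure μ₁ := isFiniteMeasure_of_le Q hμ₁le
    refine ⟨μ, μ₀, μ₁, instμ, instμ₀, instμ₁, ?_, ?_, ?_⟩
    · refine ⟨A, hmeas A, ?_, ?_⟩
      · have : μ₀ A ≤ (P.restrict Aᶜ) A := Measure.le_iff'.1 Measure.sub_le A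
        rw [Measure.restrict_apply (hmeas A)] at this
        simpa using this
      · have : μ₁ Aᶜ ≤ (Q.restrict A) Aᶜ := Measure.le_iff'.1 Measure.sub_le Aᶜ
        rw [Measure.restrict_apply (hmeas Aᶜ)] at this
        simpa using this
    · -- P = (1-α) • μ + μ₀
      haveI : IsFiniteMeasure (c • Q.restrict Aᶜ) :=
        isFiniteMeasure_of_le P (le_trans hle₀ Measure.restrict_le_self)
      have hsmul : (1 - α : ℝ≥0) • μ = c • μ := by
        rw [hc, ENNReal.smul_def]
      rw [hsmul, hμ, smul_add, smul_smul, ENNReal.mul_inv_cancel hc0 hctop,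
        one_smul, hμ₀, add_assoc, add_comm (c • Q.restrict Aᶜ),
        Measure.sub_add_cancel_of_le hle₀,
        Measure.restrict_add_restrict_compl (hmeas A)]
    · -- Q = μ + μ₁
      haveI : IsFiniteMeasure (c⁻¹ • P.restrict A) :=
        isFiniteMeasure_of_le Q (le_trans hle₁ Measure.restrict_le_self)
      rw [hμ, hμ₁, add_comm (c⁻¹ • P.restrict A), add_assoc,
        add_comm (c⁻¹ • P.restrict A), Measure.sub_add_cancel_of_le hle₁,
        add_comm, Measure.restrict_add_restrict_compl (hmeas A)]
end

section
/- Let c ∈ (0,1) and p ∈ (0, (1−c)/2). Let k be a positive integer such that c·k is an integer, and let Y₁, …, Y_k be {0,1}-valued random variables on a probability space with E[Σ_{i=1}^k Y_i] = p·k. Then there exists a subset S ⊆ {1,…,k} with |S| = c·k such that Pr[Y_j = 0 for all j ∈ S] > e^{−c·k·ln(e/c) − 1}. -/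
open MeasureTheory

/-- For 0-1 random variables `Y₁, …, Y_k` (not necessarily
independent) with `E[Σ Yᵢ] = p·k`, where `c ∈ (0,1)`, `p ∈ (0,(1-c)/2)` and
`l = c·k` is an integer, there is a set `S` of `c·k` players such that
`Pr[∀ j ∈ S, Y_j = 0] > e^{-c·k·ln(e/c) - 1}`. -/
theorem find_large_silent_set
    {Ω : Type*} [MeasurableSpace Ω] (ℙ : Measure Ω) [IsProbabilityMeasure ℙ]
    (c p : ℝ) (hc0 : 0 < c) (hc1 : c < 1) (hp0 : 0 < p) (hp : p < (1 - c) / 2)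
    (k : ℕ) (hk : 0 < k) (l : ℕ) (hl : (l : ℝ) = c * k)
    (Y : Fin k → Ω → ℝ) (hYmeas : ∀ j, Measurable (Y j))
    (hY01 : ∀ j ω, Y j ω = 0 ∨ Y j ω = 1)
    (hE : ∫ ω, (∑ j, Y j ω) ∂ℙ = p * k) :
    ∃ S : Finset (Fin k), S.card = l ∧
      ℙ {ω | ∀ j ∈ S, Y j ω = 0} >
        ENNReal.ofReal (Real.exp (-(c * k * Real.log (Real.exp 1 / c)) - 1)) := by
  classical
  have hk0 : (0:ℝ) < k := by exact_mod_cast hk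
  have hl0 : 0 < l := by
    have : (0:ℝ) < l := by rw [hl]; positivity
    exact_mod_cast this
  have hlk : l ≤ k := by
    have : (l:ℝ) ≤ k := by rw [hl]; nlinarith
    exact_mod_cast this
  have hYnn : ∀ j ω, 0 ≤ Y j ω := fun j ω => by rcases hY01 j ω with h | h <;> simp [h]
  have hYle : ∀ j ω, Y j ω ≤ 1 := fun j ω => by rcases hY01 j ω with h | h <;> simp [h]
  set X : Ω → ℝ := fun ω => ∑ j, Y j ω with hX
  have hXnn : ∀ ω, 0 ≤ X ω := fun ω => Finset.sum_nonneg fun j _ => hYnn j ω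
  have hXint : Integrable X ℙ := by
    apply integrable_finset_sum
    intro j _
    refine Integrable.mono' (integrable_const 1) (hYmeas j).aestronglyMeasurable ?_
    filter_upwards with ω
    rw [Real.norm_eq_abs, abs_of_nonneg (hYnn j ω)]
    exact hYle j ω
  set a : ℝ := (1 - c) * k with ha_def
  have h1c : (0:ℝ) < 1 - c := by linarith
  have ha : 0 < a := by rw [ha_def]; positivity
  -- Markov
  have hMarkov : (ℙ {ω | a ≤ X ω}).toReal ≤ p / (1 - c) := by
    have h := mul_meas_ge_le_integral_of_nonneg (μ := ℙ) (f := X)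
      (Filter.Eventually.of_forall hXnn) hXint a
    rw [hE] at h
    have h2 : a * (ℙ {ω | a ≤ X ω}).toReal ≤ p * k := h
    rw [ha_def] at h2
    rw [le_div_iff₀ h1c]
    nlinarith [ENNReal.toReal_nonneg (a := ℙ {ω | a ≤ X ω})]
  -- events
  set A : Finset (Fin k) → Set Ω := fun S => {ω | ∀ j ∈ S, Y j ω = 0} with hA
  have hAmeas : ∀ S, MeasurableSet (A S) := by
    intro S
    have : A S = ⋂ j ∈ S, (Y j) ⁻¹' {0} := by
      ext ω; simp [hA, Set.mem_iInter]
    rw [this]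
    exact Set.Finite.measurableSet_biInter S.finite_toSet
      fun j _ => (hYmeas j) (measurableSet_singleton 0)
  set ε : ℝ := Real.exp (-(c * k * Real.log (Real.exp 1 / c)) - 1) with hε
  by_contra hcon
  push_neg at hcon
  set 𝒮 : Finset (Finset (Fin k)) := Finset.powersetCard l Finset.univ with h𝒮
  set E : Set Ω := ⋃ S ∈ 𝒮, A S with hEdef
  have hEmeas : MeasurableSet E := 𝒮.measurableSet_biUnion fun S _ => hAmeas S
  -- {X ≤ a} ⊆ E
  have hsub : {ω | X ω ≤ a} ⊆ E := by
    intro ω hω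
    have hXval : X ω = ((Finset.univ.filter fun j => Y j ω = 1).card : ℝ) := by
      rw [hX]
      calc ∑ j, Y j ω = ∑ j, if Y j ω = 1 then (1:ℝ) else 0 :=
            Finset.sum_congr rfl fun j _ => by rcases hY01 j ω with h | h <;> simp [h]
        _ = _ := by rw [Finset.sum_boole]
    have hcards : (Finset.univ.filter fun j => Y j ω = 1).card
        + (Finset.univ.filter fun j => ¬ (Y j ω = 1)).card = k := by
      rw [Finset.card_filter_add_card_filter_not]
      simp
    have hzfilter : (Finset.univ.filter fun j => Y j ω = 0)
        = (Finset.univ.filter fun j => ¬ (Y j ω = 1)) := by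
      apply Finset.filter_congr
      intro j _
      rcases hY01 j ω with h | h <;> simp [h]
    have h1r : ((Finset.univ.filter fun j => Y j ω = 1).card : ℝ) ≤ (k : ℝ) - l := by
      rw [← hXval]
      have : a = (k : ℝ) - l := by rw [ha_def, hl]; ring
      rw [← this]; exact hω
    have h1 : (Finset.univ.filter fun j => Y j ω = 1).card ≤ k - l := by
      have : ((Finset.univ.filter fun j => Y j ω = 1).card : ℝ) ≤ ((k - l : ℕ) : ℝ) := by
        rw [Nat.cast_sub hlk]; exact h1r
      exact_mod_cast this
    have hzcard : l ≤ (Finset.univ.filter fun j => Y j ω = 0).card := by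
      rw [hzfilter]; omega
    obtain ⟨S, hSsub, hScard⟩ := Finset.exists_subset_card_eq hzcard
    have hSmem : S ∈ 𝒮 := by rw [h𝒮, Finset.mem_powersetCard_univ]; exact hScard
    have hin : ω ∈ A S := fun j hj => (Finset.mem_filter.mp (hSsub hj)).2
    show ω ∈ ⋃ S ∈ 𝒮, A S
    simp only [Set.mem_iUnion, exists_prop]
    exact ⟨S, hSmem, hin⟩
  -- upper bound on ℙ E via union bound
  have hchoose : ((Nat.choose k l : ℕ) : ℝ) * ε ≤ Real.exp (-1) := by
    have hec : (0:ℝ) < Real.exp 1 / c := by positivity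
    have hkl : Real.exp 1 / c = Real.exp 1 * k / l := by
      rw [hl]; field_simp
    have hlpos : (0:ℝ) < l := by exact_mod_cast hl0
    have hfact : ((l:ℝ)) ^ l / (Nat.factorial l) ≤ Real.exp l :=
      Real.pow_div_factorial_le_exp (x := (l:ℝ)) (Nat.cast_nonneg l) l
    have hfactpos : (0:ℝ) < (Nat.factorial l : ℝ) := by
      exact_mod_cast Nat.factorial_pos l
    have hc1' : ((Nat.choose k l : ℕ) : ℝ) ≤ (k:ℝ) ^ l / (Nat.factorial l) := by
      exact_mod_cast Nat.choose_le_pow_div l k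
    have hbound : ((Nat.choose k l : ℕ) : ℝ) ≤ (Real.exp 1 / c) ^ l := by
      rw [hkl]
      have hlpow : (0:ℝ) < (l:ℝ) ^ l := by positivity
      have h2 : (k:ℝ) ^ l / (Nat.factorial l) ≤ (k:ℝ) ^ l * Real.exp l / (l:ℝ) ^ l := by
        rw [div_le_div_iff₀ hfactpos hlpow]
        have hkpow : (0:ℝ) ≤ (k:ℝ) ^ l := by positivity
        calc (k:ℝ) ^ l * (l:ℝ) ^ l = (k:ℝ) ^ l * (l:ℝ) ^ l := rfl
          _ ≤ (k:ℝ) ^ l * (Real.exp l * (Nat.factorial l)) := by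
              apply mul_le_mul_of_nonneg_left _ hkpow
              rw [div_le_iff₀ hfactpos] at hfact
              exact hfact
          _ = (k:ℝ) ^ l * Real.exp l * (Nat.factorial l) := by ring
      have h3 : (Real.exp 1 * k / l) ^ l = (k:ℝ) ^ l * Real.exp l / (l:ℝ) ^ l := by
        rw [div_pow, mul_pow, ← Real.exp_one_pow]
        ring
      rw [h3]
      exact hc1'.trans h2
    have hexp : ε = Real.exp (-((l:ℝ) * Real.log (Real.exp 1 / c))) * Real.exp (-1) := by
      rw [hε, ← Real.exp_add]
      congr 1
      rw [hl]; ring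
    have hpow : (Real.exp 1 / c) ^ l = Real.exp ((l:ℝ) * Real.log (Real.exp 1 / c)) := by
      rw [Real.exp_nat_mul, Real.exp_log hec]
    calc ((Nat.choose k l : ℕ) : ℝ) * ε
        ≤ (Real.exp 1 / c) ^ l * ε := by
          apply mul_le_mul_of_nonneg_right hbound
          rw [hε]; positivity
      _ = Real.exp (-1) := by
          rw [hexp, hpow, ← mul_assoc, ← Real.exp_add]
          simp
  have hEle : ℙ E ≤ ENNReal.ofReal (Real.exp (-1)) := by
    calc ℙ E ≤ ∑ S ∈ 𝒮, ℙ (A S) := measure_biUnion_finset_le 𝒮 A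
      _ ≤ 𝒮.card • ENNReal.ofReal ε := by
          apply Finset.sum_le_card_nsmul
          intro S hS
          rw [h𝒮, Finset.mem_powersetCard_univ] at hS
          exact hcon S hS
      _ = (Nat.choose k l : ℕ) * ENNReal.ofReal ε := by
          rw [h𝒮, Finset.card_powersetCard, Finset.card_univ, Fintype.card_fin,
            nsmul_eq_mul]
      _ ≤ ENNReal.ofReal (Real.exp (-1)) := by
          rw [← ENNReal.ofReal_natCast, ← ENNReal.ofReal_mul (by positivity)]
          exact ENNReal.ofReal_le_ofReal hchoose
  -- lower bound: ℙ Eᶜ ≤ p/(1-c)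
  have hEc : ℙ Eᶜ ≤ ENNReal.ofReal (p / (1 - c)) := by
    have hsub2 : Eᶜ ⊆ {ω | a ≤ X ω} := by
      intro ω hω
      by_contra hlt
      exact hω (hsub (le_of_not_ge hlt : X ω ≤ a))
    calc ℙ Eᶜ ≤ ℙ {ω | a ≤ X ω} := measure_mono hsub2
      _ = ENNReal.ofReal ((ℙ {ω | a ≤ X ω}).toReal) := by
          rw [ENNReal.ofReal_toReal (measure_ne_top ℙ _)]
      _ ≤ ENNReal.ofReal (p / (1 - c)) := ENNReal.ofReal_le_ofReal hMarkov
  -- contradiction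
  have hsum : (1 : ENNReal) = ℙ E + ℙ Eᶜ := by
    rw [measure_add_measure_compl hEmeas, measure_univ]
  have hlt1 : Real.exp (-1) + p / (1 - c) < 1 := by
    have he2 : (2:ℝ) < Real.exp 1 := by
      have := Real.exp_one_gt_d9
      linarith
    have hepos := Real.exp_pos 1
    have h1 : Real.exp (-1) < 1/2 := by
      rw [Real.exp_neg]
      rw [show (1:ℝ)/2 = 2⁻¹ by norm_num]
      exact inv_strictAnti₀ (by norm_num) he2
    have h2 : p / (1 - c) < 1/2 := by
      rw [div_lt_iff₀ (by linarith)]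
      linarith
    linarith
  have : (1 : ENNReal) < 1 := by
    calc (1 : ENNReal) = ℙ E + ℙ Eᶜ := hsum
      _ ≤ ENNReal.ofReal (Real.exp (-1)) + ENNReal.ofReal (p / (1 - c)) :=
          add_le_add hEle hEc
      _ = ENNReal.ofReal (Real.exp (-1) + p / (1 - c)) := by
          rw [ENNReal.ofReal_add (Real.exp_pos _).le (by positivity)]
      _ < ENNReal.ofReal 1 := by
          exact ENNReal.ofReal_lt_ofReal_iff (by norm_num) |>.mpr hlt1
      _ = 1 := ENNReal.ofReal_one
  exact lt_irrefl _ this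
end

section
/- There is an absolute constant C such that for all positive integers n, L and every ε ∈ (0,1) there exists a deterministic streaming algorithm with finite state space σ, with log₂|σ| ≤ C·(L/ε)^{2/3}·log₂(2 + n·L/ε), processing streams of updates from [n] × {+1, −1} (with no sign restriction on the running vector), such that on every stream of at most L updates it outputs a vector ẑ ∈ ℝⁿ with ‖ẑ − x‖_∞ ≤ ε·‖x‖₂, where x ∈ ℤⁿ is the final vector of the stream. -/
/-- A deterministic turnstile streaming algorithm over `[n]` with state space
`State`: updates are pairs `(i, s)` with `s = true` meaning `x_i ← x_i + 1`
and `s = false` meaning `x_i ← x_i - 1`. -/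
structure TurnstileAlg (n : ℕ) (State : Type) where
  init : State
  step : State → Fin n × Bool → State

/-- Run the algorithm over the stream of updates. -/
def TurnstileAlg.run {n : ℕ} {State : Type} (A : TurnstileAlg n State)
    (xs : List (Fin n × Bool)) : State :=
  xs.foldl A.step A.init

/-- The running frequency vector of a turnstile stream: `x_i` is the sum of
the signs of the updates to coordinate `i`. -/
def runVec {n : ℕ} (xs : List (Fin n × Bool)) (i : Fin n) : ℤ :=
  (xs.map (fun u => if u.1 = i then (if u.2 then (1 : ℤ) else -1) else 0)).sum

/-- Euclidean norm of an integer vector. -/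
noncomputable def l2norm {n : ℕ} (x : Fin n → ℤ) : ℝ :=
  Real.sqrt (∑ i, ((x i : ℝ)) ^ 2)

/-! ### auxiliary definitions -/

def sgn (b : Bool) : ℤ := if b then 1 else -1

def mgSupp {n : ℕ} (f : Fin n → ℤ) : Finset (Fin n) :=
  Finset.univ.filter (fun i => f i ≠ 0)

def mgRaw {n : ℕ} (cap : ℕ) (f : Fin n → ℤ) (u : Fin n × Bool) : Fin n → ℤ :=
  if f u.1 ≠ 0 ∨ (mgSupp f).card < cap then
    Function.update f u.1 (f u.1 + sgn u.2)
  else fun j => f j - Int.sign (f j)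

def MGPred (n L cap : ℕ) (q : Fin (L+1) × (Fin n → ℤ)) : Prop :=
  (∀ j, |q.2 j| ≤ (q.1.val : ℤ)) ∧ (mgSupp q.2).card ≤ cap

def MGState (n L cap : ℕ) := {q : Fin (L+1) × (Fin n → ℤ) // MGPred n L cap q}

lemma abs_sgn (b : Bool) : |sgn b| = 1 := by cases b <;> simp [sgn]

lemma int_abs_sub_sign (a : ℤ) : |a - a.sign| = |a| - (if a = 0 then 0 else 1) := by
  rcases lt_trichotomy a 0 with h | h | h
  · rw [Int.sign_eq_neg_one_of_neg h, if_neg h.ne, abs_of_neg h, abs_of_nonpos (by omega)]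
    ring
  · simp [h]
  · rw [Int.sign_eq_one_of_pos h, if_neg h.ne', abs_of_pos h, abs_of_nonneg (by omega)]

lemma abs_sub_sign_le (a : ℤ) : |a - a.sign| ≤ |a| := by
  rw [int_abs_sub_sign]; split <;> omega

lemma mgSupp_mgRaw_card {n : ℕ} (cap : ℕ) (f : Fin n → ℤ) (u : Fin n × Bool)
    (h : (mgSupp f).card ≤ cap) : (mgSupp (mgRaw cap f u)).card ≤ cap := by
  unfold mgRaw
  split
  · rename_i hc
    rcases hc with hc | hc
    · -- support only within mgSupp f
      refine le_trans (Finset.card_le_card ?_) h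
      intro j hj
      simp only [mgSupp, Finset.mem_filter, Finset.mem_univ, true_and] at hj ⊢
      by_cases hju : j = u.1
      · subst hju; exact hc
      · simpa [Function.update_apply, hju] using hj
    · -- support grows by at most one
      have hsub : mgSupp (Function.update f u.1 (f u.1 + sgn u.2)) ⊆ insert u.1 (mgSupp f) := by
        intro j hj
        simp only [mgSupp, Finset.mem_filter, Finset.mem_univ, true_and] at hj
        by_cases hju : j = u.1
        · simp [hju]
        · simp only [Function.update_apply, if_neg hju] at hj
          simp [mgSupp, Finset.mem_insert, hj]
      calc (mgSupp _).card ≤ (insert u.1 (mgSupp f)).card := Finset.card_le_card hsub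
        _ ≤ (mgSupp f).card + 1 := Finset.card_insert_le _ _
        _ ≤ cap := by omega
  · -- round branch: support shrinks
    refine le_trans (Finset.card_le_card ?_) h
    intro j hj
    simp only [mgSupp, Finset.mem_filter, Finset.mem_univ, true_and] at hj ⊢
    intro hj0
    simp [hj0] at hj

lemma abs_mgRaw {n : ℕ} (cap : ℕ) (f : Fin n → ℤ) (u : Fin n × Bool) (B : ℤ)
    (h : ∀ j, |f j| ≤ B) (j : Fin n) : |mgRaw cap f u j| ≤ B + 1 := by
  unfold mgRaw
  split
  · by_cases hju : j = u.1
    · rw [hju, Function.update_self]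
      calc |f u.1 + sgn u.2| ≤ |f u.1| + |sgn u.2| := abs_add_le _ _
        _ ≤ B + 1 := by rw [abs_sgn]; exact add_le_add_left (h u.1) 1
    · rw [Function.update_apply, if_neg hju]
      exact le_trans (h j) (by omega)
  · exact le_trans (abs_sub_sign_le _) (le_trans (h j) (by omega))

def mgStep {n L cap : ℕ} (s : MGState n L cap) (u : Fin n × Bool) : MGState n L cap :=
  if h : s.val.1.val < L then
    ⟨(⟨s.val.1.val + 1, by omega⟩, mgRaw cap s.val.2 u),
      ⟨fun j => by
          have := abs_mgRaw cap s.val.2 u (s.val.1.val : ℤ) s.prop.1 j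
          push_cast
          exact this,
        mgSupp_mgRaw_card cap s.val.2 u s.prop.2⟩⟩
  else s

def synd (p R : ℕ) {n : ℕ} (x : Fin n → ℤ) : Fin R → ZMod p :=
  fun j => ∑ i, (x i : ZMod p) * ((i : ℕ) : ZMod p) ^ (j : ℕ)

abbrev AlgState (n L cap R p : ℕ) := MGState n L cap × (Fin R → ZMod p)

def theAlg (n L cap R p : ℕ) : TurnstileAlg n (AlgState n L cap R p) where
  init := ⟨⟨(0, fun _ => 0), ⟨fun j => by simp, by simp [mgSupp]⟩⟩, fun _ => 0⟩
  step := fun s u => ⟨mgStep s.1 u, fun j => s.2 j + (sgn u.2 : ZMod p) * ((u.1 : ℕ) : ZMod p) ^ (j : ℕ)⟩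

/-! ### stream basics -/

lemma run_concat {n : ℕ} {State : Type} (A : TurnstileAlg n State)
    (xs : List (Fin n × Bool)) (u : Fin n × Bool) :
    A.run (xs ++ [u]) = A.step (A.run xs) u := by
  simp [TurnstileAlg.run, List.foldl_append]

lemma runVec_nil {n : ℕ} (i : Fin n) : runVec [] i = 0 := rfl

lemma runVec_concat {n : ℕ} (xs : List (Fin n × Bool)) (u : Fin n × Bool) (i : Fin n) :
    runVec (xs ++ [u]) i = runVec xs i + (if u.1 = i then sgn u.2 else 0) := by
  simp [runVec, sgn]

lemma abs_runVec_le {n : ℕ} (xs : List (Fin n × Bool)) (i : Fin n) :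
    |runVec xs i| ≤ (xs.length : ℤ) := by
  induction xs using List.reverseRecOn with
  | nil => simp [runVec]
  | append_singleton xs u ih =>
      rw [runVec_concat]
      calc |runVec xs i + _| ≤ |runVec xs i| + |if u.1 = i then sgn u.2 else 0| := abs_add_le _ _
        _ ≤ (xs.length : ℤ) + 1 := by
            refine add_le_add ih ?_
            split
            · rw [abs_sgn]
            · simp
        _ = ((xs ++ [u]).length : ℤ) := by simp

/-! ### syndrome invariant -/

lemma synd_run {n L cap R p : ℕ} (xs : List (Fin n × Bool)) :
    ((theAlg n L cap R p).run xs).2 = synd p R (runVec xs) := by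
  induction xs using List.reverseRecOn with
  | nil =>
      funext j
      simp [TurnstileAlg.run, theAlg, synd, runVec]
  | append_singleton xs u ih =>
      rw [run_concat]
      funext j
      show ((theAlg n L cap R p).run xs).2 j + (sgn u.2 : ZMod p) * ((u.1 : ℕ) : ZMod p) ^ (j : ℕ)
        = synd p R (runVec (xs ++ [u])) j
      rw [ih]
      have hxi : ∀ i : Fin n, ((runVec (xs ++ [u]) i : ZMod p)) =
          (runVec xs i : ZMod p) + (if u.1 = i then (sgn u.2 : ZMod p) else 0) := by
        intro i
        rw [runVec_concat]
        push_cast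
        split <;> simp
      have expand : synd p R (runVec (xs ++ [u])) j
          = synd p R (runVec xs) j + (sgn u.2 : ZMod p) * ((u.1 : ℕ) : ZMod p) ^ (j : ℕ) := by
        simp only [synd]
        rw [Finset.sum_congr rfl (fun i _ => by rw [hxi i, add_mul])]
        rw [Finset.sum_add_distrib]
        congr 1
        rw [Finset.sum_congr rfl (fun i _ => by rw [ite_mul, zero_mul])]
        rw [Finset.sum_ite_eq (Finset.univ) u.1
          (fun i => (sgn u.2 : ZMod p) * ((i : ℕ) : ZMod p) ^ (j : ℕ))]
        simp
      rw [expand]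

lemma abs_sign_le (a : ℤ) : |a.sign| ≤ 1 := by
  rcases lt_trichotomy a 0 with h | h | h
  · simp [Int.sign_eq_neg_one_of_neg h]
  · simp [h]
  · simp [Int.sign_eq_one_of_pos h]

lemma mg_inv {n L cap R p : ℕ} : ∀ (xs : List (Fin n × Bool)), xs.length ≤ L →
    ((((theAlg n L cap R p).run xs).1.val.1 : ℕ) = xs.length) ∧
    ∃ r : ℕ,
      (∀ j, |((theAlg n L cap R p).run xs).1.val.2 j - runVec xs j| ≤ (r : ℤ)) ∧
      (∑ j, |((theAlg n L cap R p).run xs).1.val.2 j|) + (cap : ℤ) * r ≤ (xs.length : ℤ) := by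
  intro xs
  induction xs using List.reverseRecOn with
  | nil =>
      intro _
      refine ⟨rfl, 0, ?_, ?_⟩ <;> simp [TurnstileAlg.run, theAlg, runVec]
  | append_singleton xs u ih =>
      intro hlen
      rw [List.length_append, List.length_singleton] at hlen
      have hlen' : xs.length ≤ L := by omega
      obtain ⟨ht, r, hdrift, hsum⟩ := ih hlen'
      have hcard : (mgSupp ((theAlg n L cap R p).run xs).1.val.2).card ≤ cap :=
        ((theAlg n L cap R p).run xs).1.prop.2
      have htlt : (((theAlg n L cap R p).run xs).1.val.1 : ℕ) < L := by omega
      have hrun : ((theAlg n L cap R p).run (xs ++ [u])).1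
          = mgStep ((theAlg n L cap R p).run xs).1 u := by
        rw [run_concat]; rfl
      set f := ((theAlg n L cap R p).run xs).1.val.2 with hf
      have hT : (((theAlg n L cap R p).run (xs ++ [u])).1.val.1 : ℕ) = xs.length + 1 := by
        rw [hrun]; exact (congrArg (fun z : MGState n L cap => (z.val.1 : ℕ)) (dif_pos htlt)).trans (by simp [ht])
      have hF : ((theAlg n L cap R p).run (xs ++ [u])).1.val.2 = mgRaw cap f u := by
        rw [hrun]; exact congrArg (fun z : MGState n L cap => z.val.2) (dif_pos htlt)
      refine ⟨by rw [List.length_append, List.length_singleton]; exact hT, ?_⟩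
      simp only [hF]
      by_cases hc : f u.1 ≠ 0 ∨ (mgSupp f).card < cap
      · -- normal update
        refine ⟨r, ?_, ?_⟩
        · intro j
          show |mgRaw cap f u j - runVec (xs ++ [u]) j| ≤ (r : ℤ)
          rw [runVec_concat, mgRaw, if_pos hc]
          by_cases hju : j = u.1
          · rw [hju, Function.update_self, if_pos rfl]
            have h1 := hdrift u.1
            have : f u.1 + sgn u.2 - (runVec xs u.1 + sgn u.2) = f u.1 - runVec xs u.1 := by ring
            rw [this]
            exact h1
          · rw [Function.update_of_ne hju, if_neg (fun h => hju h.symm), add_zero]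
            exact hdrift j
        · show (∑ j, |mgRaw cap f u j|) + (cap : ℤ) * r ≤ ((xs ++ [u]).length : ℤ)
          have hbd : ∀ j : Fin n, |mgRaw cap f u j| ≤ |f j| + (if j = u.1 then 1 else 0) := by
            intro j
            rw [mgRaw, if_pos hc]
            by_cases hju : j = u.1
            · rw [hju, Function.update_self, if_pos rfl]
              calc |f u.1 + sgn u.2| ≤ |f u.1| + |sgn u.2| := abs_add_le _ _
                _ = |f u.1| + 1 := by rw [abs_sgn]
            · rw [Function.update_of_ne hju, if_neg hju, add_zero]
          have hsum' : (∑ j, |mgRaw cap f u j|) ≤ (∑ j, |f j|) + 1 := by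
            calc (∑ j, |mgRaw cap f u j|) ≤ ∑ j, (|f j| + (if j = u.1 then 1 else 0)) :=
                  Finset.sum_le_sum (fun j _ => hbd j)
              _ = (∑ j, |f j|) + 1 := by
                  rw [Finset.sum_add_distrib, Finset.sum_ite_eq' Finset.univ u.1 (fun _ => (1:ℤ))]
                  simp
          rw [List.length_append, List.length_singleton]
          push_cast
          linarith
      · -- round
        push_neg at hc
        obtain ⟨hfu, hge⟩ := hc
        have hceq : (mgSupp f).card = cap := le_antisymm hcard hge
        refine ⟨r + 1, ?_, ?_⟩
        · intro j
          show |mgRaw cap f u j - runVec (xs ++ [u]) j| ≤ ((r : ℤ) + 1 : ℤ)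
          rw [runVec_concat, mgRaw, if_neg (by push_neg; exact ⟨hfu, hge⟩)]
          have habs : |f j - Int.sign (f j) - (runVec xs j + (if u.1 = j then sgn u.2 else 0))|
              ≤ |f j - runVec xs j| + |Int.sign (f j)| + |if u.1 = j then sgn u.2 else 0| := by
            have e : f j - Int.sign (f j) - (runVec xs j + (if u.1 = j then sgn u.2 else 0))
                = (f j - runVec xs j) + (-(Int.sign (f j))) + (-(if u.1 = j then sgn u.2 else 0)) := by
              ring
            rw [e]
            calc |_ + _ + _| ≤ |(f j - runVec xs j) + (-(Int.sign (f j)))| + |(-(if u.1 = j then sgn u.2 else 0))| := abs_add_le _ _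
              _ ≤ |f j - runVec xs j| + |(-(Int.sign (f j)))| + |(-(if u.1 = j then sgn u.2 else 0))| := by
                  gcongr
                  exact abs_add_le _ _
              _ = _ := by rw [abs_neg, abs_neg]
          by_cases hju : u.1 = j
          · -- at the updated coordinate the counter is zero
            have hfj : f j = 0 := by rw [← hju]; exact hfu
            have : |f j - Int.sign (f j) - (runVec xs j + (if u.1 = j then sgn u.2 else 0))|
                ≤ |f j - runVec xs j| + 0 + 1 := by
              refine le_trans habs ?_
              gcongr
              · simp [hfj]
              · rw [if_pos hju, abs_sgn]
            have h1 := hdrift j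
            omega
          · have : |f j - Int.sign (f j) - (runVec xs j + (if u.1 = j then sgn u.2 else 0))|
                ≤ |f j - runVec xs j| + 1 + 0 := by
              refine le_trans habs ?_
              gcongr
              · exact abs_sign_le _
              · rw [if_neg hju]; simp
            have h1 := hdrift j
            omega
        · show (∑ j, |mgRaw cap f u j|) + (cap : ℤ) * ((r : ℤ) + 1) ≤ ((xs ++ [u]).length : ℤ)
          have hdec : (∑ j, |mgRaw cap f u j|) = (∑ j, |f j|) - cap := by
            rw [show (∑ j, |mgRaw cap f u j|) = ∑ j, |f j - Int.sign (f j)| from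
              Finset.sum_congr rfl (fun j _ => by rw [mgRaw, if_neg (by push_neg; exact ⟨hfu, hge⟩)])]
            rw [Finset.sum_congr rfl (fun j _ => int_abs_sub_sign (f j))]
            rw [Finset.sum_sub_distrib]
            congr 1
            have : (∑ j, (if f j = 0 then (0:ℤ) else 1)) = ∑ j, (if f j ≠ 0 then (1:ℤ) else 0) := by
              refine Finset.sum_congr rfl (fun j _ => ?_)
              by_cases h : f j = 0 <;> simp [h]
            rw [this, Finset.sum_boole]
            rw [show Finset.filter (fun x => f x ≠ 0) Finset.univ = mgSupp f from rfl, hceq]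
          have hexp : (cap : ℤ) * ((r : ℤ) + 1) = (cap : ℤ) * r + cap := by ring
          rw [hdec, List.length_append, List.length_singleton]
          push_cast
          push_cast at hsum
          linarith

/-! ### syndrome injectivity on sparse vectors -/

lemma synd_sub {p R n : ℕ} (x y : Fin n → ℤ) (h : synd p R x = synd p R y) :
    synd p R (fun i => x i - y i) = 0 := by
  funext j
  have hj := congrFun h j
  simp only [synd] at hj ⊢
  have : ∀ i : Fin n, ((x i - y i : ℤ) : ZMod p) * ((i : ℕ) : ZMod p) ^ (j : ℕ)
      = (x i : ZMod p) * ((i : ℕ) : ZMod p) ^ (j : ℕ)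
        - (y i : ZMod p) * ((i : ℕ) : ZMod p) ^ (j : ℕ) := by
    intro i; push_cast; ring
  rw [Finset.sum_congr rfl (fun i _ => this i), Finset.sum_sub_distrib, hj]
  simp

lemma synd_injective {p R n : ℕ} (hp : p.Prime) (hn : n ≤ p) (w : Fin n → ℤ)
    (hsupp : (mgSupp w).card ≤ R) (hbd : ∀ i, |w i| < (p : ℤ))
    (h0 : synd p R w = 0) : ∀ i, w i = 0 := by
  haveI : Fact p.Prime := ⟨hp⟩
  set S := mgSupp w with hS
  have hsR : S.card ≤ R := hsupp
  let e : Fin S.card ≃o {x // x ∈ S} := S.orderIsoOfFin rfl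
  let α : Fin n → ZMod p := fun i => ((i : ℕ) : ZMod p)
  have hα : Function.Injective α := by
    intro i i' hii
    have h1 : ((i : ℕ) : ZMod p).val = (i : ℕ) := ZMod.val_natCast_of_lt (lt_of_lt_of_le i.isLt hn)
    have h2 : (((i' : ℕ)) : ZMod p).val = (i' : ℕ) := ZMod.val_natCast_of_lt (lt_of_lt_of_le i'.isLt hn)
    have h3 : ((i : ℕ) : ZMod p).val = (((i' : ℕ)) : ZMod p).val := congrArg ZMod.val hii
    rw [h1, h2] at h3
    exact Fin.ext h3
  let v : Fin S.card → ZMod p := fun i => α ((e i) : Fin n)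
  have hv : Function.Injective v := by
    intro a b hab
    have : ((e a : Fin n)) = ((e b : Fin n)) := hα hab
    have : (e a) = (e b) := Subtype.ext this
    exact e.injective this
  let M : Matrix (Fin S.card) (Fin S.card) (ZMod p) := (Matrix.vandermonde v).transpose
  have hdet : M.det ≠ 0 := by
    rw [Matrix.det_transpose, Matrix.det_vandermonde]
    rw [Finset.prod_ne_zero_iff]
    intro i _
    rw [Finset.prod_ne_zero_iff]
    intro jj hjj
    have hij : i ≠ jj := by
      intro h
      rw [h] at hjj
      exact absurd (Finset.mem_Ioi.mp hjj) (lt_irrefl _)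
    exact sub_ne_zero.mpr (fun h => hij (hv h.symm))
  let vv : Fin S.card → ZMod p := fun i => ((w ((e i) : Fin n) : ℤ) : ZMod p)
  have hmv : M.mulVec vv = 0 := by
    funext j
    have hjR : (j : ℕ) < R := lt_of_lt_of_le j.isLt hsR
    have hsynd := congrFun h0 ⟨(j : ℕ), hjR⟩
    simp only [synd] at hsynd
    -- restrict the sum to the support
    have hrestrict : (∑ i ∈ S, (w i : ZMod p) * ((i : ℕ) : ZMod p) ^ (j : ℕ))
        = ∑ i : Fin n, (w i : ZMod p) * ((i : ℕ) : ZMod p) ^ (j : ℕ) := by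
      refine Finset.sum_subset (Finset.subset_univ S) (fun i _ hiS => ?_)
      have : w i = 0 := by
        by_contra hwi
        exact hiS (by simp [hS, mgSupp, hwi])
      rw [this]
      simp
    have hattach : (∑ i ∈ S, (w i : ZMod p) * ((i : ℕ) : ZMod p) ^ (j : ℕ))
        = ∑ i : {x // x ∈ S}, (w (i : Fin n) : ZMod p) * (((i : Fin n) : ℕ) : ZMod p) ^ (j : ℕ) :=
      (Finset.sum_coe_sort S _).symm
    have hequiv : (∑ i : {x // x ∈ S}, (w (i : Fin n) : ZMod p) * (((i : Fin n) : ℕ) : ZMod p) ^ (j : ℕ))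
        = ∑ i' : Fin S.card, (w ((e i') : Fin n) : ZMod p) * (((e i' : Fin n) : ℕ) : ZMod p) ^ (j : ℕ) :=
      (Equiv.sum_comp e.toEquiv
        (fun i => (w (i : Fin n) : ZMod p) * (((i : Fin n) : ℕ) : ZMod p) ^ (j : ℕ))).symm
    show (∑ i', M j i' * vv i') = 0
    have hM : ∀ i', M j i' * vv i'
        = (w ((e i') : Fin n) : ZMod p) * (((e i' : Fin n) : ℕ) : ZMod p) ^ (j : ℕ) := by
      intro i'
      show (Matrix.vandermonde v).transpose j i' * vv i' = _
      rw [Matrix.transpose_apply, Matrix.vandermonde_apply, mul_comm]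
    rw [Finset.sum_congr rfl (fun i' _ => hM i'), ← hequiv, ← hattach, hrestrict, hsynd]
    simp
  have hvv : vv = 0 := Matrix.eq_zero_of_mulVec_eq_zero hdet hmv
  intro i
  by_cases hwi : w i = 0
  · exact hwi
  · have hiS : i ∈ S := by simp [hS, mgSupp, hwi]
    have : vv (e.symm ⟨i, hiS⟩) = 0 := by rw [hvv]; rfl
    have hcast : ((w i : ℤ) : ZMod p) = 0 := by
      have he : ((e (e.symm ⟨i, hiS⟩)) : Fin n) = i := by
        rw [OrderIso.apply_symm_apply]
      rw [show vv (e.symm ⟨i, hiS⟩) = ((w ((e (e.symm ⟨i, hiS⟩)) : Fin n) : ℤ) : ZMod p) from rfl, he] at this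
      exact this
    have hdvd : ((p : ℤ)) ∣ w i := (ZMod.intCast_zmod_eq_zero_iff_dvd _ _).mp hcast
    exact Int.eq_zero_of_abs_lt_dvd hdvd (hbd i)

/-! ### cardinality of the MG state space -/

def mgList {n : ℕ} (f : Fin n → ℤ) : List (Fin n) := (mgSupp f).sort (· ≤ ·)

lemma mgList_nodup {n : ℕ} (f : Fin n → ℤ) : (mgList f).Nodup := Finset.sort_nodup _ _

lemma mem_mgList {n : ℕ} (f : Fin n → ℤ) (i : Fin n) : i ∈ mgList f ↔ f i ≠ 0 := by
  simp [mgList, Finset.mem_sort, mgSupp]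

lemma mgList_length {n : ℕ} (f : Fin n → ℤ) : (mgList f).length = (mgSupp f).card :=
  Finset.length_sort _

lemma mg_abs_le {n L cap : ℕ} (q : MGState n L cap) (i : Fin n) : |q.val.2 i| ≤ (L : ℤ) := by
  refine le_trans (q.prop.1 i) ?_
  exact_mod_cast Nat.le_of_lt_succ q.val.1.isLt

def mgEncode {n L cap : ℕ} (q : MGState n L cap) :
    Fin (L+1) × (Fin cap → Option (Fin n × Fin (2*L+1))) :=
  (q.val.1, fun j =>
    if hj : (j : ℕ) < (mgList q.val.2).length then
      some ((mgList q.val.2).get ⟨j, hj⟩,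
        ⟨(q.val.2 ((mgList q.val.2).get ⟨j, hj⟩) + L).toNat, by
          have h1 := mg_abs_le q ((mgList q.val.2).get ⟨j, hj⟩)
          rw [abs_le] at h1
          omega⟩)
    else none)

def mgDecode {n L cap : ℕ} (T : Fin cap → Option (Fin n × Fin (2*L+1))) (i : Fin n) : ℤ :=
  ∑ j : Fin cap, Option.elim (T j) 0 (fun q => if q.1 = i then ((q.2 : ℕ) : ℤ) - L else 0)

lemma mgDecode_encode {n L cap : ℕ} (q : MGState n L cap) (i : Fin n) :
    mgDecode (mgEncode q).2 i = q.val.2 i := by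
  set f := q.val.2 with hf
  set l := mgList f with hl
  have hlen : l.length ≤ cap := by rw [hl, mgList_length]; exact q.prop.2
  have hval : ∀ (x : Fin n), (((f x + L).toNat : ℕ) : ℤ) - L = f x := by
    intro x
    have h1 := mg_abs_le q x
    rw [abs_le] at h1
    simp only [← hf] at h1
    omega
  have hterm : ∀ j : Fin cap, Option.elim ((mgEncode q).2 j) 0
      (fun q' => if q'.1 = i then ((q'.2 : ℕ) : ℤ) - L else 0)
      = if hj : (j : ℕ) < l.length then
          (if l.get ⟨j, hj⟩ = i then f (l.get ⟨j, hj⟩) else 0) else 0 := by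
    intro j
    show Option.elim (if hj : (j : ℕ) < l.length then _ else none) 0 _ = _
    by_cases hj : (j : ℕ) < l.length
    · rw [dif_pos hj, dif_pos hj]
      show (if l.get ⟨j, hj⟩ = i then (((f (l.get ⟨j, hj⟩) + L).toNat : ℕ) : ℤ) - L else 0) = _
      rw [hval]
    · rw [dif_neg hj, dif_neg hj]
      rfl
  rw [mgDecode, Finset.sum_congr rfl (fun j _ => hterm j)]
  by_cases hfi : f i = 0
  · rw [hfi]
    refine Finset.sum_eq_zero (fun j _ => ?_)
    by_cases hj : (j : ℕ) < l.length
    · rw [dif_pos hj]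
      by_cases hg : l.get ⟨j, hj⟩ = i
      · rw [if_pos hg, hg, hfi]
      · rw [if_neg hg]
    · rw [dif_neg hj]
  · have hmem : i ∈ l := (mem_mgList f i).mpr hfi
    obtain ⟨j0, hget⟩ := List.mem_iff_get.mp hmem
    have hj0cap : (j0 : ℕ) < cap := lt_of_lt_of_le j0.isLt hlen
    rw [Finset.sum_eq_single (⟨(j0 : ℕ), hj0cap⟩ : Fin cap)]
    · have hidx : ((⟨(j0 : ℕ), hj0cap⟩ : Fin cap) : ℕ) < l.length := by simpa using j0.isLt
      rw [dif_pos hidx]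
      have heq : l.get ⟨((⟨(j0 : ℕ), hj0cap⟩ : Fin cap) : ℕ), hidx⟩ = i := by
        have hje : (⟨((⟨(j0 : ℕ), hj0cap⟩ : Fin cap) : ℕ), hidx⟩ : Fin l.length) = j0 :=
          Fin.ext rfl
        rw [hje]
        exact hget
      rw [if_pos heq, heq]
    · intro j _ hne
      by_cases hj : (j : ℕ) < l.length
      · rw [dif_pos hj]
        by_cases hg : l.get ⟨j, hj⟩ = i
        · exfalso
          have : (⟨j, hj⟩ : Fin l.length) = j0 := by
            apply (List.Nodup.get_inj_iff (mgList_nodup f)).mp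
            rw [hget, ← hl] at *
            rw [hg, hget]
          apply hne
          have hv : (j : ℕ) = (j0 : ℕ) := congrArg Fin.val this
          exact Fin.ext hv
        · rw [if_neg hg]
      · rw [dif_neg hj]
    · intro h
      exact absurd (Finset.mem_univ _) h

lemma mgEncode_injective {n L cap : ℕ} : Function.Injective (@mgEncode n L cap) := by
  intro a b hab
  have h1 : a.val.1 = b.val.1 := congrArg (fun z => z.1) hab
  have h2 : a.val.2 = b.val.2 := by
    funext i
    rw [← mgDecode_encode a i, ← mgDecode_encode b i, congrArg (fun z => z.2) hab]
  exact Subtype.ext (Prod.ext h1 h2)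

noncomputable def mgFintype (n L cap : ℕ) : Fintype (MGState n L cap) :=
  Fintype.ofInjective mgEncode mgEncode_injective

lemma mg_card_le (n L cap : ℕ) :
    @Fintype.card (MGState n L cap) (mgFintype n L cap) ≤ (L+1) * (n * (2*L+1) + 1)^cap := by
  have h := @Fintype.card_le_of_injective _ _ (mgFintype n L cap) _ mgEncode mgEncode_injective
  refine le_trans h (le_of_eq ?_)
  simp [Fintype.card_fun]

/-! ### the main theorem -/


set_option maxHeartbeats 2000000 in
/-- There is an absolute constant `C > 0` such that the
`ℓ_∞/ℓ₂` sparse-recovery guarantee `‖ẑ - x‖_∞ ≤ ε‖x‖₂` is achievable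
deterministically on every general turnstile stream of at most `L`
`±1` updates over `[n]`, using `C·(L/ε)^{2/3}·log₂(2 + nL/ε)` bits of space. -/
theorem general_turnstile_linf_l2_upper_bound :
    ∃ C : ℝ, 0 < C ∧
      ∀ (n L : ℕ), 0 < n → 0 < L → ∀ (ε : ℝ), 0 < ε → ε < 1 →
        ∃ (State : Type) (inst : Fintype State) (A : TurnstileAlg n State)
          (out : State → (Fin n → ℝ)),
          Real.logb 2 (@Fintype.card State inst) ≤
            C * ((L / ε) ^ ((2 : ℝ) / 3)) * Real.logb 2 (2 + n * L / ε) ∧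
          ∀ xs : List (Fin n × Bool), xs.length ≤ L →
            ∀ i : Fin n,
              |out (A.run xs) i - ((runVec xs i : ℝ))| ≤ ε * l2norm (runVec xs) := by
  classical
  refine ⟨100, by norm_num, ?_⟩
  intro n L hn hL ε hε hε1
  have hn1 : (1:ℝ) ≤ n := by exact_mod_cast hn
  have hL1 : (1:ℝ) ≤ L := by exact_mod_cast hL
  have hLε0 : (0:ℝ) < (L:ℝ)/ε := by positivity
  have hLε : (1:ℝ) ≤ (L:ℝ)/ε := by
    rw [le_div_iff₀ hε]
    nlinarith
  set Q : ℝ := ((L:ℝ)/ε) ^ ((2:ℝ)/3) with hQdef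
  have hQ1 : 1 ≤ Q := Real.one_le_rpow hLε (by norm_num)
  set K : ℕ := ⌈Q⌉₊ with hKdef
  have hK1 : 1 ≤ K := Nat.one_le_ceil_iff.mpr (by linarith)
  have hKQ : Q ≤ (K:ℝ) := Nat.le_ceil Q
  have hK2Q : (K:ℝ) ≤ 2*Q := by
    have h0 := Nat.ceil_lt_add_one (le_of_lt (lt_of_lt_of_le zero_lt_one hQ1)) (R := ℝ) (a := Q)
    have h1 : (K:ℝ) < Q + 1 := by exact_mod_cast h0
    linarith
  -- the prime
  obtain ⟨p, hp, hpgt, hple⟩ := Nat.exists_prime_lt_and_le_two_mul (max n (2*L+1)) (by omega)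
  haveI : Fact p.Prime := ⟨hp⟩
  haveI : NeZero p := ⟨hp.ne_zero⟩
  have hpn : n ≤ p := le_of_lt (lt_of_le_of_lt (le_max_left _ _) hpgt)
  have hpL : 2*L+1 < p := lt_of_le_of_lt (le_max_right _ _) hpgt
  set R : ℕ := 8*K with hRdef
  letI iMG : Fintype (MGState n L K) := mgFintype n L K
  letI iA : Fintype (AlgState n L K R p) := instFintypeProd _ _
  set Δ : ℕ := L / K with hΔdef
  set DEC : AlgState n L K R p → Prop := fun st => ∃ y : Fin n → ℤ,
    (mgSupp y).card ≤ 4*K ∧ (∀ i, |y i| ≤ (L:ℤ)) ∧ synd p R y = st.2 ∧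
    (∀ i, |y i - st.1.val.2 i| ≤ (Δ:ℤ)) with hDECdef
  refine ⟨AlgState n L K R p, iA, theAlg n L K R p,
    (fun st i => if h : DEC st then (((Exists.choose h) i : ℤ) : ℝ) else ((st.1.val.2 i : ℤ) : ℝ)),
    ?_, ?_⟩
  · -- space bound
    set B : ℕ := n*(2*L+1)+1 with hBdef
    have hcardA : Fintype.card (AlgState n L K R p)
        = Fintype.card (MGState n L K) * p^R := by
      rw [Fintype.card_prod, Fintype.card_fun, ZMod.card, Fintype.card_fin]
    have hcardle : Fintype.card (AlgState n L K R p) ≤ (L+1) * B^K * p^R := by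
      rw [hcardA]
      exact Nat.mul_le_mul_right _ (mg_card_le n L K)
    haveI : Nonempty (AlgState n L K R p) := ⟨(theAlg n L K R p).init⟩
    have hcpos : 0 < Fintype.card (AlgState n L K R p) := Fintype.card_pos
    set m : ℝ := 2 + (n:ℝ)*(L:ℝ)/ε with hmdef
    have ht1 : (1:ℝ) ≤ (n:ℝ)*(L:ℝ)/ε := by
      rw [le_div_iff₀ hε]
      nlinarith
    have hm3 : (3:ℝ) ≤ m := by rw [hmdef]; linarith
    have hmpos : (0:ℝ) < m := by linarith
    have hG1 : 1 ≤ Real.logb 2 m := by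
      have h2 : Real.logb 2 (2:ℝ) = 1 := Real.logb_self_eq_one (by norm_num)
      rw [← h2]
      exact Real.logb_le_logb_of_le (by norm_num) (by norm_num) (by linarith)
    have hG0 : 0 ≤ Real.logb 2 m := by linarith
    -- numeric inequalities
    have hnt : (n:ℝ) ≤ (n:ℝ)*(L:ℝ)/ε := by
      rw [le_div_iff₀ hε]
      nlinarith
    have hLt : (L:ℝ) ≤ (n:ℝ)*(L:ℝ)/ε := by
      rw [le_div_iff₀ hε]
      nlinarith
    have hnLt : (n:ℝ)*(L:ℝ) ≤ (n:ℝ)*(L:ℝ)/ε := by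
      rw [le_div_iff₀ hε]
      have h := mul_le_mul_of_nonneg_left hε1.le (by positivity : (0:ℝ) ≤ (n:ℝ)*(L:ℝ))
      linarith
    have hbL : Real.logb 2 ((L:ℝ)+1) ≤ Real.logb 2 m := by
      apply Real.logb_le_logb_of_le (by norm_num) (by linarith)
      rw [hmdef]; linarith
    have hbB : Real.logb 2 ((B:ℕ):ℝ) ≤ 2 * Real.logb 2 m := by
      have hBle : ((B:ℕ):ℝ) ≤ m^2 := by
        rw [hBdef, hmdef]
        push_cast
        nlinarith [sq_nonneg ((n:ℝ)*(L:ℝ)/ε)]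
      have hBpos : (0:ℝ) < ((B:ℕ):ℝ) := by
        rw [hBdef]; push_cast; nlinarith
      calc Real.logb 2 ((B:ℕ):ℝ) ≤ Real.logb 2 (m^2) :=
            Real.logb_le_logb_of_le (by norm_num) hBpos hBle
        _ = 2 * Real.logb 2 m := by rw [Real.logb_pow]; norm_num
    have hbp : Real.logb 2 ((p:ℕ):ℝ) ≤ 3 * Real.logb 2 m := by
      have hpnat : p ≤ 2*(n + 2*L+1) := by
        refine le_trans hple ?_
        have : max n (2*L+1) ≤ n + (2*L+1) :=
          max_le (Nat.le_add_right _ _) (Nat.le_add_left _ _)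
        omega
      have hple2 : ((p:ℕ):ℝ) ≤ m^3 := by
        have h1 : ((p:ℕ):ℝ) ≤ 2*((n:ℝ) + 2*(L:ℝ)+1) := by exact_mod_cast hpnat
        rw [hmdef]
        nlinarith [sq_nonneg ((n:ℝ)*(L:ℝ)/ε), pow_pos (lt_of_lt_of_le zero_lt_one ht1) 3,
          sq_nonneg (1 + (n:ℝ)*(L:ℝ)/ε)]
      have hppos : (0:ℝ) < ((p:ℕ):ℝ) := by exact_mod_cast hp.pos
      calc Real.logb 2 ((p:ℕ):ℝ) ≤ Real.logb 2 (m^3) :=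
            Real.logb_le_logb_of_le (by norm_num) hppos hple2
        _ = 3 * Real.logb 2 m := by rw [Real.logb_pow]; norm_num
    -- expand the logarithm
    have hL1pos : (0:ℝ) < (L:ℝ)+1 := by linarith
    have hBpos : (0:ℝ) < ((B:ℕ):ℝ) := by rw [hBdef]; push_cast; nlinarith
    have hppos : (0:ℝ) < ((p:ℕ):ℝ) := by exact_mod_cast hp.pos
    have hexpand : Real.logb 2 ((((L+1) * B^K * p^R : ℕ)):ℝ)
        = Real.logb 2 ((L:ℝ)+1) + (K:ℝ) * Real.logb 2 ((B:ℕ):ℝ)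
          + (R:ℝ) * Real.logb 2 ((p:ℕ):ℝ) := by
      push_cast
      rw [Real.logb_mul (by positivity) (by positivity),
        Real.logb_mul (by positivity) (by positivity),
        Real.logb_pow, Real.logb_pow]
    have hmono : Real.logb 2 (Fintype.card (AlgState n L K R p) : ℝ)
        ≤ Real.logb 2 ((((L+1) * B^K * p^R : ℕ)):ℝ) := by
      apply Real.logb_le_logb_of_le (by norm_num) (by exact_mod_cast hcpos)
      exact_mod_cast hcardle
    have hRreal : (R:ℝ) = 8*(K:ℝ) := by rw [hRdef]; push_cast; ring
    have hKpos : (0:ℝ) ≤ (K:ℝ) := by positivity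
    have htotal : Real.logb 2 (Fintype.card (AlgState n L K R p) : ℝ)
        ≤ (1 + 26*(K:ℝ)) * Real.logb 2 m := by
      rw [hexpand] at hmono
      have h1 : (K:ℝ) * Real.logb 2 ((B:ℕ):ℝ) ≤ (K:ℝ) * (2 * Real.logb 2 m) :=
        mul_le_mul_of_nonneg_left hbB hKpos
      have h2 : (R:ℝ) * Real.logb 2 ((p:ℕ):ℝ) ≤ (R:ℝ) * (3 * Real.logb 2 m) :=
        mul_le_mul_of_nonneg_left hbp (by rw [hRreal]; positivity)
      rw [hRreal] at h2
      calc Real.logb 2 (Fintype.card (AlgState n L K R p) : ℝ)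
          ≤ Real.logb 2 ((L:ℝ)+1) + (K:ℝ) * Real.logb 2 ((B:ℕ):ℝ)
            + (R:ℝ) * Real.logb 2 ((p:ℕ):ℝ) := hmono
        _ ≤ Real.logb 2 m + (K:ℝ) * (2 * Real.logb 2 m) + 8*(K:ℝ) * (3 * Real.logb 2 m) := by
            rw [hRreal] at *
            linarith
        _ = (1 + 26*(K:ℝ)) * Real.logb 2 m := by ring
    have hcoef : (1 + 26*(K:ℝ)) ≤ 100 * Q := by nlinarith
    calc Real.logb 2 (Fintype.card (AlgState n L K R p) : ℝ)
        ≤ (1 + 26*(K:ℝ)) * Real.logb 2 m := htotal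
      _ ≤ (100 * Q) * Real.logb 2 m := mul_le_mul_of_nonneg_right hcoef hG0
      _ = 100 * Q * Real.logb 2 m := by ring
  · -- correctness
    intro xs hlen i
    set st := (theAlg n L K R p).run xs with hst
    set x : Fin n → ℤ := runVec xs with hx
    have hsynd : st.2 = synd p R x := synd_run xs
    obtain ⟨ht, r, hdrift, hsum⟩ := mg_inv (cap := K) (R := R) (p := p) xs hlen
    set f : Fin n → ℤ := st.1.val.2 with hfdef
    have hrΔ : (r:ℕ) ≤ Δ := by
      have hnn : (0:ℤ) ≤ ∑ j, |f j| := Finset.sum_nonneg (fun j _ => abs_nonneg _)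
      have h1 : (K:ℤ) * r ≤ (L:ℤ) := by
        have h2 : (xs.length : ℤ) ≤ (L:ℤ) := by exact_mod_cast hlen
        calc (K:ℤ) * r ≤ (∑ j, |f j|) + (K:ℤ) * r := by linarith
          _ ≤ (xs.length : ℤ) := hsum
          _ ≤ (L:ℤ) := h2
      rw [hΔdef, Nat.le_div_iff_mul_le (by omega : 0 < K)]
      exact_mod_cast (by linarith : (r:ℤ) * K ≤ (L:ℤ))
    have hclose : ∀ j, |f j - x j| ≤ (Δ:ℤ) :=
      fun j => le_trans (hdrift j) (by exact_mod_cast hrΔ)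
    have habsx : ∀ i', |x i'| ≤ (L:ℤ) :=
      fun i' => le_trans (abs_runVec_le xs i') (by exact_mod_cast hlen)
    have hl2nonneg : 0 ≤ l2norm x := Real.sqrt_nonneg _
    have hΔreal : (Δ:ℝ) ≤ ε * Real.sqrt K := by
      have hQpos : 0 < Q := lt_of_lt_of_le zero_lt_one hQ1
      have hKpos : (0:ℝ) < (K:ℝ) := by exact_mod_cast (by omega : 0 < K)
      have hstep1 : (Δ:ℝ) ≤ (L:ℝ)/(K:ℝ) := by rw [hΔdef]; exact_mod_cast Nat.cast_div_le
      have hstep2 : (L:ℝ)/(K:ℝ) ≤ (L:ℝ)/Q := by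
        apply div_le_div_of_nonneg_left (by linarith) hQpos hKQ
      have hthird : ((L:ℝ)/ε) ^ ((1:ℝ)/3) * Q = (L:ℝ)/ε := by
        rw [hQdef, ← Real.rpow_add hLε0]
        norm_num
      have hLQ : (L:ℝ)/Q = ε * ((L:ℝ)/ε) ^ ((1:ℝ)/3) := by
        rw [div_eq_iff (ne_of_gt hQpos), mul_assoc, hthird]
        field_simp
      have hsqrt : ((L:ℝ)/ε) ^ ((1:ℝ)/3) ≤ Real.sqrt K := by
        have h1 : ((L:ℝ)/ε) ^ ((1:ℝ)/3) = Real.sqrt Q := by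
          rw [hQdef, Real.sqrt_eq_rpow, ← Real.rpow_mul (le_of_lt hLε0)]
          norm_num
        rw [h1]
        exact Real.sqrt_le_sqrt hKQ
      calc (Δ:ℝ) ≤ (L:ℝ)/(K:ℝ) := hstep1
        _ ≤ (L:ℝ)/Q := hstep2
        _ = ε * ((L:ℝ)/ε) ^ ((1:ℝ)/3) := hLQ
        _ ≤ ε * Real.sqrt K := mul_le_mul_of_nonneg_left hsqrt (le_of_lt hε)
    have hl2big : 4*K < (mgSupp x).card → 2 * Real.sqrt K ≤ l2norm x := by
      intro hcard
      have hterm : ∀ i' ∈ mgSupp x, (1:ℝ) ≤ ((x i' : ℤ):ℝ)^2 := by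
        intro i' hi'
        simp only [mgSupp, Finset.mem_filter, Finset.mem_univ, true_and] at hi'
        have h1 : (1:ℤ) ≤ |x i'| := Int.one_le_abs hi'
        have h2 : (1:ℝ) ≤ |((x i' : ℤ):ℝ)| := by
          rw [← Int.cast_abs]
          exact_mod_cast h1
        calc (1:ℝ) = 1^2 := by norm_num
          _ ≤ |((x i' : ℤ):ℝ)|^2 := by nlinarith
          _ = ((x i' : ℤ):ℝ)^2 := sq_abs _
      have hsum2 : (4*(K:ℝ)) ≤ ∑ i', ((x i' : ℤ):ℝ)^2 := by
        calc (4*(K:ℝ)) ≤ ((mgSupp x).card : ℝ) := by exact_mod_cast le_of_lt hcard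
          _ = ∑ _i' ∈ mgSupp x, (1:ℝ) := by simp
          _ ≤ ∑ i' ∈ mgSupp x, ((x i' : ℤ):ℝ)^2 := Finset.sum_le_sum hterm
          _ ≤ ∑ i', ((x i' : ℤ):ℝ)^2 :=
              Finset.sum_le_sum_of_subset_of_nonneg (Finset.subset_univ _)
                (fun _ _ _ => sq_nonneg _)
      have h4 : Real.sqrt (4*(K:ℝ)) = 2 * Real.sqrt K := by
        rw [show (4:ℝ)*(K:ℝ) = (2:ℝ)^2 * K by ring, Real.sqrt_mul (by positivity),
          Real.sqrt_sq (by norm_num)]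
      calc 2 * Real.sqrt K = Real.sqrt (4*(K:ℝ)) := h4.symm
        _ ≤ Real.sqrt (∑ i', ((x i' : ℤ):ℝ)^2) := Real.sqrt_le_sqrt hsum2
        _ = l2norm x := rfl
    by_cases hdec : DEC st
    · -- decoder found a sparse candidate y
      obtain ⟨hy1, hy2, hy3, hy4⟩ := hdec.choose_spec
      set y : Fin n → ℤ := hdec.choose with hy
      beta_reduce
      rw [dif_pos hdec]
      by_cases hxs : (mgSupp x).card ≤ 4*K
      · -- exact recovery
        have hw0 : ∀ i', y i' - x i' = 0 := by
          apply synd_injective hp hpn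
          · -- sparsity of the difference
            have hsub : mgSupp (fun i' => y i' - x i') ⊆ mgSupp y ∪ mgSupp x := by
              intro j hj
              simp only [mgSupp, Finset.mem_filter, Finset.mem_univ, true_and,
                Finset.mem_union] at hj ⊢
              by_contra hcon
              push_neg at hcon
              exact hj (by rw [hcon.1, hcon.2]; ring)
            calc (mgSupp (fun i' => y i' - x i')).card
                ≤ (mgSupp y ∪ mgSupp x).card := Finset.card_le_card hsub
              _ ≤ (mgSupp y).card + (mgSupp x).card := Finset.card_union_le _ _
              _ ≤ R := by rw [hRdef]; omega
          · intro i'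
            have h1 := hy2 i'
            have h2 := habsx i'
            have h3 : (2*L+1 : ℤ) < p := by exact_mod_cast hpL
            have h4 : |y i' - x i'| ≤ |y i'| + |x i'| := abs_sub _ _
            omega
          · exact synd_sub y x (by rw [hy3, hsynd])
        have hyi : y i = x i := by have := hw0 i; omega
        rw [show Exists.choose hdec i = x i from hyi]
        simp only [sub_self, abs_zero]
        positivity
      · -- x is dense, 2Δ suffices
        push_neg at hxs
        have h2 := hl2big hxs
        have hyx : |y i - x i| ≤ 2*(Δ:ℤ) := by
          calc |y i - x i| = |(y i - f i) + (f i - x i)| := by ring_nf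
            _ ≤ |y i - f i| + |f i - x i| := abs_add_le _ _
            _ ≤ (Δ:ℤ) + (Δ:ℤ) := add_le_add (hy4 i) (hclose i)
            _ = 2*(Δ:ℤ) := by ring
        have hcast : |((y i : ℤ):ℝ) - ((x i : ℤ):ℝ)| ≤ 2*(Δ:ℝ) := by
          have : ((|y i - x i| : ℤ) : ℝ) ≤ ((2*(Δ:ℤ) : ℤ) : ℝ) := by exact_mod_cast hyx
          rw [Int.cast_abs] at this
          push_cast at this ⊢
          linarith
        calc |((y i : ℤ):ℝ) - ((x i : ℤ):ℝ)| ≤ 2*(Δ:ℝ) := hcast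
          _ ≤ 2*(ε * Real.sqrt K) := by linarith
          _ = ε * (2 * Real.sqrt K) := by ring
          _ ≤ ε * l2norm x := by
              exact mul_le_mul_of_nonneg_left h2 (le_of_lt hε)
    · -- no candidate: x itself is dense
      beta_reduce
      rw [dif_neg hdec]
      have hxdense : 4*K < (mgSupp x).card := by
        by_contra hcon
        push_neg at hcon
        exact hdec ⟨x, hcon, habsx, hsynd.symm, fun i' => by
          have := hclose i'
          rw [abs_sub_comm]
          exact this⟩
      have h2 := hl2big hxdense
      have hcast : |((f i : ℤ):ℝ) - ((x i : ℤ):ℝ)| ≤ (Δ:ℝ) := by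
        have : ((|f i - x i| : ℤ) : ℝ) ≤ (((Δ:ℤ)) : ℝ) := by exact_mod_cast hclose i
        rw [Int.cast_abs] at this
        push_cast at this ⊢
        linarith
      have hsqrtK : (0:ℝ) ≤ Real.sqrt K := Real.sqrt_nonneg _
      calc |((f i : ℤ):ℝ) - ((x i : ℤ):ℝ)| ≤ (Δ:ℝ) := hcast
        _ ≤ ε * Real.sqrt K := hΔreal
        _ ≤ ε * (2 * Real.sqrt K) := by nlinarith
        _ ≤ ε * l2norm x := mul_le_mul_of_nonneg_left h2 (le_of_lt hε)
end
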